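/- Let X be a locally compact Hausdorff space and (Y,d) a metric space with at least two points. Then the following are equivalent: (1) MU(X,Y) is metrizable; (2) MU(X,Y) is first countable; (3) MU(X,Y) is Fréchet-Urysohn; (4) MU(X,Y) is sequential; (5) MU(X,Y) has countable tightness; (6) X is hemicompact. -/
import Mathlib


open TopologicalSpace Metric Set

noncomputable section

/-- `F` is usco: upper semicontinuous with nonempty compact values. -/
def IsUsco {X Y : Type*} [TopologicalSpace X] [TopologicalSpace Y] (F : X → Set Y) : Prop :=
  (∀ x, (F x).Nonempty) ∧ (∀ x, IsCompact (F x)) ∧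
    ∀ x, ∀ V : Set Y, IsOpen V → F x ⊆ V →
      ∃ U : Set X, IsOpen U ∧ x ∈ U ∧ ∀ x' ∈ U, F x' ⊆ V

/-- `F` is minimal usco: minimal w.r.t. inclusion (of graphs) among usco maps. -/
def IsMinimalUsco {X Y : Type*} [TopologicalSpace X] [TopologicalSpace Y] (F : X → Set Y) : Prop :=
  IsUsco F ∧ ∀ G : X → Set Y, IsUsco G → (∀ x, G x ⊆ F x) → G = F

/-- The space `MU(X,Y)` of minimal usco maps from `X` to `Y`, as a subspace of the space of all
maps `X → K(Y)` with the uniformity of uniform convergence on compact sets, where the hyperspace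
`K(Y)` of nonempty compact subsets of `Y` carries the Hausdorff metric. -/
def MU (X Y : Type*) [TopologicalSpace X] [MetricSpace Y] : Type _ :=
  {F : UniformOnFun X (NonemptyCompacts Y) {K : Set X | IsCompact K} //
    IsMinimalUsco (fun x => ((UniformOnFun.toFun {K : Set X | IsCompact K} F) x : Set Y))}

instance (X Y : Type*) [TopologicalSpace X] [MetricSpace Y] : UniformSpace (MU X Y) :=
  inferInstanceAs (UniformSpace
    {F : UniformOnFun X (NonemptyCompacts Y) {K : Set X | IsCompact K} //
      IsMinimalUsco (fun x => ((UniformOnFun.toFun {K : Set X | IsCompact K} F) x : Set Y))})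

instance (X Y : Type*) [TopologicalSpace X] [MetricSpace Y] : TopologicalSpace (MU X Y) :=
  (inferInstance : UniformSpace (MU X Y)).toTopologicalSpace

/-- The underlying multifunction of a minimal usco map. -/
def MU.toFun {X Y : Type*} [TopologicalSpace X] [MetricSpace Y] (F : MU X Y) : X → Set Y :=
  fun x => ((UniformOnFun.toFun {K : Set X | IsCompact K} F.val) x : Set Y)

/-- The value of a minimal usco map at a point, as a nonempty compact subset of `Y`. -/
def MU.val' {X Y : Type*} [TopologicalSpace X] [MetricSpace Y] (F : MU X Y) (x : X) :
    NonemptyCompacts Y :=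
  UniformOnFun.toFun {K : Set X | IsCompact K} F.val x

/-- `D₂(X,Y)`: the minimal usco maps whose total image has at most two points. -/
def D2 (X Y : Type*) [TopologicalSpace X] [MetricSpace Y] : Set (MU X Y) :=
  {F | (⋃ x, F.toFun x).encard ≤ 2}

/-- A space is locally σ-compact if every point has a σ-compact neighborhood. -/
def LocallySigmaCompact (Z : Type*) [TopologicalSpace Z] : Prop :=
  ∀ z : Z, ∃ s ∈ nhds z, IsSigmaCompact s

end

/-- The tightness of a space: `ω +` the least `κ` such that whenever `z ∈ closure A`, some
subset of `A` of cardinality `≤ κ` has `z` in its closure. -/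
noncomputable def tightnessCard (Z : Type*) [TopologicalSpace Z] : Cardinal :=
  max Cardinal.aleph0 (sInf {κ : Cardinal | ∀ (A : Set Z) (z : Z), z ∈ closure A →
    ∃ B : Set Z, B ⊆ A ∧ Cardinal.mk ↥B ≤ κ ∧ z ∈ closure B})

/-- `X` is hemicompact: there is a countable family of compact sets cofinal in the compact
subsets of `X` ordered by inclusion. -/
def Hemicompact (X : Type*) [TopologicalSpace X] : Prop :=
  ∃ Q : ℕ → Set X, (∀ n, IsCompact (Q n)) ∧ ∀ K : Set X, IsCompact K → ∃ n, K ⊆ Q n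

section AuxLemmas

open Filter Set Metric TopologicalSpace

/-! ### General tightness lemmas -/

lemma tightnessCard_eq_aleph0_of_sequential (Z : Type*) [TopologicalSpace Z]
    [SequentialSpace Z] : tightnessCard Z = Cardinal.aleph0 := by
  have hmem : Cardinal.aleph0 ∈ {κ : Cardinal | ∀ (A : Set Z) (z : Z), z ∈ closure A →
      ∃ B : Set Z, B ⊆ A ∧ Cardinal.mk ↥B ≤ κ ∧ z ∈ closure B} := by
    intro A z hz
    set D : Set Z := {w | ∃ B : Set Z, B ⊆ A ∧ B.Countable ∧ w ∈ closure B} with hD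
    have hAD : A ⊆ D := fun w hw =>
      ⟨{w}, singleton_subset_iff.2 hw, countable_singleton w, subset_closure rfl⟩
    have hseq : IsSeqClosed D := by
      intro u p hu hp
      choose B hBA hBc hBcl using hu
      refine ⟨⋃ n, B n, iUnion_subset hBA, countable_iUnion hBc, ?_⟩
      rw [_root_.mem_closure_iff]
      intro O hO hpO
      obtain ⟨n, hn⟩ := (hp.eventually_mem (hO.mem_nhds hpO)).exists
      exact (_root_.mem_closure_iff.1 (hBcl n) O hO hn).mono
        (inter_subset_inter_right _ (subset_iUnion B n))
    obtain ⟨B, h1, h2, h3⟩ := closure_minimal hAD hseq.isClosed hz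
    exact ⟨B, h1, by rw [Cardinal.mk_le_aleph0_iff]; exact countable_coe_iff.2 h2, h3⟩
  unfold tightnessCard
  rw [max_eq_left (csInf_le' hmem)]

/-! ### The uniformity and closure in `MU X Y` -/

variable {X Y : Type*} [TopologicalSpace X] [MetricSpace Y]

lemma MU_uniformity_hasBasis :
    (uniformity (MU X Y)).HasBasis
      (fun Kε : Set X × ℝ => IsCompact Kε.1 ∧ 0 < Kε.2)
      (fun Kε => {FG : MU X Y × MU X Y |
        ∀ x ∈ Kε.1, dist (FG.1.val' x) (FG.2.val' x) < Kε.2}) := by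
  have hne : ({K : Set X | IsCompact K}).Nonempty := ⟨∅, isCompact_empty⟩
  have hdir : DirectedOn (· ⊆ ·) {K : Set X | IsCompact K} := fun s hs t ht =>
    ⟨s ∪ t, hs.union ht, subset_union_left, subset_union_right⟩
  have hb := UniformOnFun.hasBasis_uniformity_of_basis X (NonemptyCompacts Y)
    {K : Set X | IsCompact K} hne hdir Metric.uniformity_basis_dist
  have heq : uniformity (MU X Y) =
      Filter.comap (fun q : MU X Y × MU X Y => (q.1.val, q.2.val))
        (uniformity (UniformOnFun X (NonemptyCompacts Y) {K : Set X | IsCompact K})) := rfl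
  rw [heq]
  exact hb.comap _

lemma MU_mem_closure {A : Set (MU X Y)} {F : MU X Y} :
    F ∈ closure A ↔ ∀ K : Set X, IsCompact K → ∀ ε : ℝ, 0 < ε →
      ∃ G ∈ A, ∀ x ∈ K, dist (F.val' x) (G.val' x) < ε := by
  rw [mem_closure_iff_nhds_basis (nhds_basis_uniformity' MU_uniformity_hasBasis)]
  constructor
  · intro h K hK ε hε
    obtain ⟨G, hG1, hG2⟩ := h (K, ε) ⟨hK, hε⟩
    exact ⟨G, hG1, hG2⟩
  · rintro h ⟨K, ε⟩ ⟨hK, hε⟩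
    obtain ⟨G, hG1, hG2⟩ := h K hK ε hε
    exact ⟨G, hG1, hG2⟩

/-! ### Building elements of `MU X Y` -/

def MU.mk' (f : X → NonemptyCompacts Y) (h : IsMinimalUsco fun x => (f x : Set Y)) :
    MU X Y := ⟨UniformOnFun.ofFun _ f, h⟩

@[simp] lemma MU.mk'_val' (f : X → NonemptyCompacts Y)
    (h : IsMinimalUsco fun x => (f x : Set Y)) (x : X) : (MU.mk' f h).val' x = f x := rfl

def singletonNC (y : Y) : NonemptyCompacts Y :=
  ⟨⟨{y}, isCompact_singleton⟩, singleton_nonempty y⟩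

@[simp] lemma coe_singletonNC (y : Y) : (singletonNC y : Set Y) = {y} := rfl

def pairNC (a b : Y) : NonemptyCompacts Y :=
  ⟨⟨{a, b}, ((finite_singleton b).insert a).isCompact⟩, insert_nonempty _ _⟩

@[simp] lemma coe_pairNC (a b : Y) : (pairNC a b : Set Y) = {a, b} := rfl

lemma isMinimalUsco_const (y : Y) : IsMinimalUsco fun _ : X => ((singletonNC y : Set Y)) := by
  refine ⟨⟨fun _ => singleton_nonempty y, fun _ => isCompact_singleton,
    fun x V hV hsub => ⟨univ, isOpen_univ, mem_univ x, fun _ _ => hsub⟩⟩, ?_⟩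
  intro G hG hsub
  funext x
  exact ((hG.1 x).subset_singleton_iff.1 (by simpa using hsub x))

variable (a b : Y)

-- The basic two-valued map: `{a}` on `V`, `{a,b}` on the boundary, `{b}` outside `closure V`.
open Classical in
noncomputable def FV (V : Set X) : X → NonemptyCompacts Y := fun z =>
  if z ∈ V then singletonNC a else if z ∈ closure V then pairNC a b else singletonNC b

lemma FV_subset_pair (V : Set X) (z : X) : (FV a b V z : Set Y) ⊆ {a, b} := by
  unfold FV
  split_ifs <;> simp

lemma isUsco_FV {V : Set X} (hV : IsOpen V) : IsUsco fun z => ((FV a b V z : Set Y)) := by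
  refine ⟨fun z => (FV a b V z).nonempty, fun z => (FV a b V z).isCompact, ?_⟩
  intro x W hW hsub
  have hsub' : (FV a b V x : Set Y) ⊆ W := hsub
  by_cases hx : x ∈ V
  · refine ⟨V, hV, hx, fun x' hx' => ?_⟩
    show (FV a b V x' : Set Y) ⊆ W
    have h1 : (FV a b V x' : Set Y) = {a} := by unfold FV; rw [if_pos hx']; rfl
    have h2 : (FV a b V x : Set Y) = {a} := by unfold FV; rw [if_pos hx]; rfl
    rw [h1, ← h2]; exact hsub'
  · by_cases hx' : x ∈ closure V
    · have h2 : (FV a b V x : Set Y) = {a, b} := by unfold FV; rw [if_neg hx, if_pos hx']; rfl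
      exact ⟨univ, isOpen_univ, mem_univ x,
        fun z _ => (FV_subset_pair a b V z).trans (by rw [← h2]; exact hsub')⟩
    · refine ⟨(closure V)ᶜ, isClosed_closure.isOpen_compl, hx', fun z hz => ?_⟩
      show (FV a b V z : Set Y) ⊆ W
      have hzV : z ∉ V := fun h => hz (subset_closure h)
      have h1 : (FV a b V z : Set Y) = {b} := by unfold FV; rw [if_neg hzV, if_neg hz]; rfl
      have h2 : (FV a b V x : Set Y) = {b} := by unfold FV; rw [if_neg hx, if_neg hx']; rfl
      rw [h1, ← h2]; exact hsub'

lemma isMinimalUsco_FV (hab : a ≠ b) {V : Set X} (hVreg : interior (closure V) = V) :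
    IsMinimalUsco fun z => ((FV a b V z : Set Y)) := by
  have hV : IsOpen V := hVreg ▸ isOpen_interior
  refine ⟨isUsco_FV a b hV, ?_⟩
  intro G hG hsub
  funext x
  show G x = (FV a b V x : Set Y)
  by_cases hx : x ∈ V
  · have h2 : (FV a b V x : Set Y) = {a} := by unfold FV; rw [if_pos hx]; rfl
    rw [h2]
    exact (hG.1 x).subset_singleton_iff.1 (by rw [← h2]; exact hsub x)
  · by_cases hx' : x ∈ closure V
    · have h2 : (FV a b V x : Set Y) = {a, b} := by unfold FV; rw [if_neg hx, if_pos hx']; rfl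
      rw [h2]
      have hsubx : G x ⊆ {a, b} := by rw [← h2]; exact hsub x
      have hor : ∀ y ∈ G x, y = a ∨ y = b := fun y hy => by simpa using hsubx hy
      have hbmem : b ∈ G x := by
        by_contra hb
        have hGx : G x = {a} := (hG.1 x).subset_singleton_iff.1 (fun y hy => by
          rcases hor y hy with h | h
          · exact h
          · exact absurd (h ▸ hy) hb)
        obtain ⟨U, hU, hxU, hUsub⟩ := hG.2.2 x (ball a (dist a b)) isOpen_ball
          (by rw [hGx]; exact singleton_subset_iff.2 (mem_ball_self (dist_pos.2 hab)))
        have hxcl : x ∈ closure ((closure V)ᶜ) := by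
          rw [closure_compl, hVreg]; exact hx
        obtain ⟨z, hzU, hz⟩ := _root_.mem_closure_iff.1 hxcl U hU hxU
        have hzV : z ∉ V := fun h => hz (subset_closure h)
        have h1 : (FV a b V z : Set Y) = {b} := by unfold FV; rw [if_neg hzV, if_neg hz]; rfl
        have hGz : G z = {b} := (hG.1 z).subset_singleton_iff.1 (by rw [← h1]; exact hsub z)
        have hball : b ∈ ball a (dist a b) := hUsub z hzU (by rw [hGz]; rfl)
        rw [mem_ball, dist_comm] at hball
        exact lt_irrefl _ hball
      have hamem : a ∈ G x := by
        by_contra ha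
        have hGx : G x = {b} := (hG.1 x).subset_singleton_iff.1 (fun y hy => by
          rcases hor y hy with h | h
          · exact absurd (h ▸ hy) ha
          · exact h)
        obtain ⟨U, hU, hxU, hUsub⟩ := hG.2.2 x (ball b (dist a b)) isOpen_ball
          (by rw [hGx]; exact singleton_subset_iff.2 (mem_ball_self (dist_pos.2 hab)))
        obtain ⟨z, hzU, hz⟩ := _root_.mem_closure_iff.1 hx' U hU hxU
        have h1 : (FV a b V z : Set Y) = {a} := by unfold FV; rw [if_pos hz]; rfl
        have hGz : G z = {a} := (hG.1 z).subset_singleton_iff.1 (by rw [← h1]; exact hsub z)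
        have hball : a ∈ ball b (dist a b) := hUsub z hzU (by rw [hGz]; rfl)
        rw [mem_ball] at hball
        exact lt_irrefl _ hball
      exact Subset.antisymm hsubx (pair_subset hamem hbmem)
    · have h2 : (FV a b V x : Set Y) = {b} := by unfold FV; rw [if_neg hx, if_neg hx']; rfl
      rw [h2]
      exact (hG.1 x).subset_singleton_iff.1 (by rw [← h2]; exact hsub x)

end AuxLemmas

section MainLemmas

open Filter Set Metric TopologicalSpace

variable {X Y : Type*} [TopologicalSpace X] [MetricSpace Y]

lemma metrizable_of_hemicompact (hX : Hemicompact X) : MetrizableSpace (MU X Y) := by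
  obtain ⟨Q, hQc, hQcof⟩ := hX
  set t : ℕ → Set X := fun n => ⋃ k ∈ Finset.range (n + 1), Q k with ht'
  have ht : ∀ n, IsCompact (t n) := fun n => (Finset.range (n + 1)).isCompact_biUnion
    fun k _ => hQc k
  have hmono : Monotone t := fun m n hmn =>
    biUnion_subset_biUnion_left (Finset.range_subset_range.2 (by omega))
  have hex : ∀ s ∈ {K : Set X | IsCompact K}, ∃ n, s ⊆ t n := fun s hs =>
    (hQcof s hs).imp fun n hn =>
      hn.trans (subset_biUnion_of_mem (Finset.self_mem_range_succ n))
  haveI : Filter.IsCountablyGenerated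
      (uniformity (UniformOnFun X (NonemptyCompacts Y) {K : Set X | IsCompact K})) :=
    UniformOnFun.isCountablyGenerated_uniformity _ ht hmono hex
  haveI : Filter.IsCountablyGenerated (uniformity (MU X Y)) := by
    have heq : uniformity (MU X Y) =
        Filter.comap (fun q : MU X Y × MU X Y => (q.1.val, q.2.val))
          (uniformity (UniformOnFun X (NonemptyCompacts Y) {K : Set X | IsCompact K})) := rfl
    rw [heq]; infer_instance
  haveI : T0Space (MU X Y) := by
    refine ⟨fun x y hxy => ?_⟩
    have h1 : y ∈ closure ({x} : Set (MU X Y)) :=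
      specializes_iff_mem_closure.1 hxy.specializes
    rw [MU_mem_closure] at h1
    have hpt : ∀ z : X, y.val' z = x.val' z := by
      intro z
      refine eq_of_forall_dist_le fun ε hε => ?_
      obtain ⟨G, hG, hd⟩ := h1 {z} isCompact_singleton ε hε
      rw [mem_singleton_iff] at hG
      subst hG
      exact (hd z rfl).le
    exact Subtype.ext (funext fun z => (hpt z).symm)
  exact UniformSpace.metrizableSpace

lemma hemicompact_of_MU_tight [T2Space X] [LocallyCompactSpace X] [Nontrivial Y]
    (h : tightnessCard (MU X Y) = Cardinal.aleph0) : Hemicompact X := by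
  obtain ⟨a, b, hab⟩ := exists_pair_ne Y
  set A : Set (MU X Y) := {F | ∃ V : Set X, interior (closure V) = V ∧
    IsCompact (closure V) ∧ ∀ z, F.val' z = FV a b V z} with hA
  set Fa : MU X Y := MU.mk' (fun _ => singletonNC a) (isMinimalUsco_const a) with hFa
  -- `Fa` is in the closure of `A`
  have hclosA : Fa ∈ closure A := by
    rw [MU_mem_closure]
    intro K hK ε hε
    obtain ⟨K', hK', hKint⟩ := exists_compact_superset hK
    set W : Set X := interior K' with hW
    set V : Set X := interior (closure W) with hV
    have hclVW : closure V ⊆ closure W := closure_minimal interior_subset isClosed_closure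
    have hVreg : interior (closure V) = V := by
      refine Subset.antisymm (interior_mono hclVW) (interior_maximal subset_closure isOpen_interior)
    have hclWK' : closure W ⊆ K' := closure_minimal interior_subset hK'.isClosed
    have hVcomp : IsCompact (closure V) :=
      hK'.of_isClosed_subset isClosed_closure (hclVW.trans hclWK')
    have hKV : K ⊆ V := hKint.trans (interior_maximal subset_closure isOpen_interior)
    refine ⟨MU.mk' (FV a b V) (isMinimalUsco_FV a b hab hVreg), ⟨V, hVreg, hVcomp,
      fun z => rfl⟩, ?_⟩
    intro x hx
    have h1 : FV a b V x = singletonNC a := by unfold FV; rw [if_pos (hKV hx)]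
    rw [MU.mk'_val', MU.mk'_val', h1, dist_self]
    exact hε
  -- extract a countable subfamily via countable tightness
  have h2 : sInf {κ : Cardinal | ∀ (A : Set (MU X Y)) (z : MU X Y), z ∈ closure A →
      ∃ B : Set (MU X Y), B ⊆ A ∧ Cardinal.mk ↥B ≤ κ ∧ z ∈ closure B} ≤ Cardinal.aleph0 := by
    unfold tightnessCard at h
    exact max_eq_left_iff.1 h
  have hSne : Set.Nonempty {κ : Cardinal | ∀ (A : Set (MU X Y)) (z : MU X Y), z ∈ closure A →
      ∃ B : Set (MU X Y), B ⊆ A ∧ Cardinal.mk ↥B ≤ κ ∧ z ∈ closure B} :=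
    ⟨Cardinal.mk (MU X Y), fun A z hz => ⟨A, Subset.rfl, Cardinal.mk_set_le _, hz⟩⟩
  obtain ⟨B, hBA, hBcard, hBclos⟩ := csInf_mem hSne A Fa hclosA
  have hBctble : B.Countable := by
    have := hBcard.trans h2
    rw [Cardinal.mk_le_aleph0_iff] at this
    exact countable_coe_iff.1 this
  have hBne : B.Nonempty := by
    rcases B.eq_empty_or_nonempty with rfl | hne
    · rw [closure_empty] at hBclos; exact absurd hBclos (notMem_empty _)
    · exact hne
  obtain ⟨f, hf⟩ := hBctble.exists_eq_range hBne
  have hfA : ∀ n, ∃ V : Set X, interior (closure V) = V ∧ IsCompact (closure V) ∧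
      ∀ z, (f n).val' z = FV a b V z := fun n => hBA (by rw [hf]; exact mem_range_self n)
  choose V hVreg hVcomp hVeq using hfA
  refine ⟨fun n => closure (V n), hVcomp, ?_⟩
  intro K hK
  rw [MU_mem_closure] at hBclos
  obtain ⟨G, hGB, hGd⟩ := hBclos K hK (dist a b) (dist_pos.2 hab)
  obtain ⟨n, rfl⟩ : ∃ n, f n = G := by rw [hf] at hGB; exact hGB
  refine ⟨n, fun z hz => ?_⟩
  by_contra hzV
  have hzV' : z ∉ V n := fun hm => hzV (subset_closure hm)
  have hb' : b ∈ (FV a b (V n) z : Set Y) := by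
    unfold FV
    rw [if_neg hzV']
    split_ifs <;> simp
  have hdist := hGd z hz
  rw [hVeq n z] at hdist
  have hle : dist a b ≤ dist (Fa.val' z) (FV a b (V n) z) := by
    have hne1 : (FV a b (V n) z : Set Y).Nonempty := (FV a b (V n) z).nonempty
    have hfin : EMetric.hausdorffEdist (FV a b (V n) z : Set Y) ({a} : Set Y) ≠ ⊤ :=
      hausdorffEdist_ne_top_of_nonempty_of_bounded hne1 (singleton_nonempty a)
        (FV a b (V n) z).isCompact.isBounded Bornology.isBounded_singleton
    have h3 : infDist b ({a} : Set Y) ≤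
        hausdorffDist (FV a b (V n) z : Set Y) ({a} : Set Y) :=
      infDist_le_hausdorffDist_of_mem hb' hfin
    rw [infDist_singleton] at h3
    have h4 : (Fa.val' z : Set Y) = ({a} : Set Y) := rfl
    rw [NonemptyCompacts.dist_eq, h4, hausdorffDist_comm, dist_comm a b]
    exact h3
  linarith

end MainLemmas

/-- The following are equivalent: `MU(X,Y)` is metrizable / first countable / Fréchet-Urysohn /
sequential / of countable tightness, and `X` is hemicompact. -/
theorem statement17 {X Y : Type*} [TopologicalSpace X] [T2Space X] [LocallyCompactSpace X]
    [MetricSpace Y] [Nontrivial Y] :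
    (MetrizableSpace (MU X Y) ↔ Hemicompact X) ∧
    (FirstCountableTopology (MU X Y) ↔ Hemicompact X) ∧
    (FrechetUrysohnSpace (MU X Y) ↔ Hemicompact X) ∧
    (SequentialSpace (MU X Y) ↔ Hemicompact X) ∧
    (tightnessCard (MU X Y) = Cardinal.aleph0 ↔ Hemicompact X) := by
  
  have himp : tightnessCard (MU X Y) = Cardinal.aleph0 → Hemicompact X :=
    hemicompact_of_MU_tight
  have hmet : Hemicompact X → MetrizableSpace (MU X Y) := metrizable_of_hemicompact
  have hseq : SequentialSpace (MU X Y) → Hemicompact X := fun hs =>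
    himp (@tightnessCard_eq_aleph0_of_sequential _ _ hs)
  have hfc : FirstCountableTopology (MU X Y) → Hemicompact X := fun h => by
    haveI := h; exact hseq inferInstance
  have hfu : FrechetUrysohnSpace (MU X Y) → Hemicompact X := fun h => by
    haveI := h; exact hseq inferInstance
  have hm : MetrizableSpace (MU X Y) → Hemicompact X := fun h => by
    haveI := h; exact hseq inferInstance
  exact ⟨⟨hm, hmet⟩, ⟨hfc, fun h => by haveI := hmet h; infer_instance⟩,
    ⟨hfu, fun h => by haveI := hmet h; infer_instance⟩,
    ⟨hseq, fun h => by haveI := hmet h; infer_instance⟩,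
    ⟨himp, fun h => by haveI := hmet h; exact tightnessCard_eq_aleph0_of_sequential _⟩⟩
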